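/- Let z ≥ 2, let X, Y encode the left and right tape contents with all base-z digits in {1,...,z-1}, and let c with 0 < c < z encode the write symbol. Then the update (X, Y) ↦ (zX + zc, Y/z − (Y/z mod z)) correctly simulates a right move of the tape head: zX + zc is the encoding of the left sequence extended by one cell containing the write symbol, and Y/z − (Y/z mod z) is the encoding of the right sequence with its first cell removed, while (Y/z) mod z is the digit encoding the symbol in the new scanned cell. -/

import Mathlib

lemma icc_shift_sum (f : ℕ → ℕ) (n : ℕ) :
    ∑ i ∈ Finset.Icc 1 (n + 1), f i = f 1 + ∑ i ∈ Finset.Icc 1 n, f (i + 1) := by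
  induction n with
  | zero => simp
  | succ n ih =>
    rw [Finset.sum_Icc_succ_top (by omega), ih, Finset.sum_Icc_succ_top (by omega)]
    ring

/-- Arithmetic correctness of the right-move update (bottom case of Equation (3)):
`z·X + z·c` encodes the left sequence extended by one cell containing the write
symbol `c`, `Y/z − ((Y/z) mod z)` encodes the right sequence with its first cell
removed, and `(Y/z) mod z` is the digit encoding the symbol in the new scanned cell. -/
theorem right_move_update (z x y cw : ℕ) (c d : ℕ → ℕ) (hz : 2 ≤ z) (hy : 1 ≤ y)
    (hc : ∀ i, 1 ≤ i → i ≤ x → 0 < c i ∧ c i < z)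
    (hd : ∀ j, 1 ≤ j → j ≤ y → 0 < d j ∧ d j < z)
    (hcw : 0 < cw ∧ cw < z) :
    (∃ c' : ℕ → ℕ, c' 1 = cw ∧ (∀ i, 1 ≤ i → i ≤ x → c' (i + 1) = c i) ∧
        z * (∑ i ∈ Finset.Icc 1 x, z ^ i * c i) + z * cw =
          ∑ i ∈ Finset.Icc 1 (x + 1), z ^ i * c' i) ∧
    ((∑ j ∈ Finset.Icc 1 y, z ^ j * d j) / z -
        ((∑ j ∈ Finset.Icc 1 y, z ^ j * d j) / z) % z =
      ∑ j ∈ Finset.Icc 1 (y - 1), z ^ j * d (j + 1)) ∧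
    ((∑ j ∈ Finset.Icc 1 y, z ^ j * d j) / z) % z = d 1 := by
  have hzpos : 0 < z := by omega
  constructor
  · refine ⟨fun j => if j = 1 then cw else c (j - 1), rfl, ?_, ?_⟩
    · intro i hi _
      simp [Nat.succ_ne_succ, show i + 1 ≠ 1 by omega, show i ≠ 0 by omega]
    · have key : ∀ i ∈ Finset.Icc 1 x,
          z ^ (i + 1) * (if i + 1 = 1 then cw else c (i + 1 - 1)) = z * (z ^ i * c i) := by
        intro i hi
        simp only [Finset.mem_Icc] at hi
        rw [if_neg (by omega), Nat.add_sub_cancel]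
        ring
      rw [icc_shift_sum (fun i => z ^ i * (if i = 1 then cw else c (i - 1))),
        Finset.sum_congr rfl key, Finset.mul_sum]
      simp only [if_pos rfl, eq_self_iff_true, if_true, pow_one]
      ring
  · obtain ⟨m, rfl⟩ : ∃ m, y = m + 1 := ⟨y - 1, by omega⟩
    set R := ∑ j ∈ Finset.Icc 1 m, z ^ j * d (j + 1) with hR
    have hsum : ∑ j ∈ Finset.Icc 1 (m + 1), z ^ j * d j = z * (d 1 + R) := by
      rw [icc_shift_sum (fun j => z ^ j * d j), hR, mul_add, Finset.mul_sum]
      congr 1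
      · ring
      · exact Finset.sum_congr rfl fun i hi => by ring
    have hdvd : z ∣ R := by
      refine Finset.dvd_sum fun j hj => ?_
      simp only [Finset.mem_Icc] at hj
      exact Dvd.dvd.mul_right (dvd_pow_self z (by omega)) _
    have hdiv : (∑ j ∈ Finset.Icc 1 (m + 1), z ^ j * d j) / z = d 1 + R := by
      rw [hsum, Nat.mul_div_cancel_left _ hzpos]
    have hd1 : d 1 < z := (hd 1 le_rfl (by omega)).2
    clear_value R
    have hmod : (d 1 + R) % z = d 1 := by
      obtain ⟨k, rfl⟩ := hdvd
      rw [Nat.add_mul_mod_self_left, Nat.mod_eq_of_lt hd1]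
    refine ⟨?_, ?_⟩
    · rw [hdiv, hmod, hR]
      simp
    · rw [hdiv, hmod]
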